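/- Let n ∈ ℕ, S = {0, 1, …, 2^n − 1}, and p ∈ (0,1]. Let P be the probability distribution on S×S×S given by P(x,y,z) = p·2^{−n}·[x = y = z] + (1−p)·2^{−2n}·[x = (y+z) mod 2^n], and let R be the classical channel from S to S×S given by R(y',z'|y) = p·[y' = y]·[z' = y] + (1−p)·2^{−n}·[(y'+z') mod 2^n = y]. Then (i) R maps the Y-marginal of P to the YZ-marginal of P, i.e., R(P_Y) = P_YZ, and (ii) D( P ‖ (id⊗R)(P_XY) ) ≤ log(1/p). -/
import Mathlib


noncomputable section

namespace CIT

/-- A probability distribution on a finite set. -/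
def IsDist {X : Type*} [Fintype X] (p : X → ℝ) : Prop :=
  (∀ x, 0 ≤ p x) ∧ ∑ x, p x = 1

/-- Support inclusion `supp p ⊆ supp q`. -/
def suppLe {X : Type*} (p q : X → ℝ) : Prop := ∀ x, p x ≠ 0 → q x ≠ 0

open Classical in
/-- Relative entropy (base 2), with `0·log 0 = 0`, `+∞` if the support
condition fails. -/
def relEnt {X : Type*} [Fintype X] (p q : X → ℝ) : EReal :=
  if suppLe p q then ((∑ x, p x * Real.logb 2 (p x / q x) : ℝ) : EReal) else ⊤

open Classical in
/-- Max-relative entropy `D_max(p‖q) = log max_{x ∈ supp p} p(x)/q(x)`,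
`+∞` if the support condition fails. -/
def dMax {X : Type*} [Fintype X] (p q : X → ℝ) : EReal :=
  if suppLe p q then
    ((Real.logb 2 (sSup {r : ℝ | ∃ x, p x ≠ 0 ∧ r = p x / q x}) : ℝ) : EReal)
  else ⊤

open Classical in
/-- Rényi relative entropy of order `α` (base 2), with `D_1 := D` and `+∞`
when `α > 1` and the support condition fails. -/
def renyi {X : Type*} [Fintype X] (α : ℝ) (p q : X → ℝ) : EReal :=
  if α = 1 then relEnt p q
  else if 1 < α ∧ ¬ suppLe p q then ⊤
  else (((α - 1)⁻¹ * Real.logb 2 (∑ x, p x ^ α * q x ^ (1 - α)) : ℝ) : EReal)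

/-- The `XY`-marginal of a tripartite distribution. -/
def margXY {X Y Z : Type*} [Fintype Z] (P : X × Y × Z → ℝ) : X × Y → ℝ :=
  fun t => ∑ z, P (t.1, t.2, z)

/-- The `YZ`-marginal of a tripartite distribution. -/
def margYZ {X Y Z : Type*} [Fintype X] (P : X × Y × Z → ℝ) : Y × Z → ℝ :=
  fun t => ∑ x, P (x, t.1, t.2)

/-- The `Y`-marginal of a tripartite distribution. -/
def margY {X Y Z : Type*} [Fintype X] [Fintype Z] (P : X × Y × Z → ℝ) : Y → ℝ :=
  fun y => ∑ x, ∑ z, P (x, y, z)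

/-- Conditional mutual information
`I(X:Z|Y)_P = Σ P(x,y,z) log( P(x,y,z)·P_Y(y) / (P_XY(x,y)·P_YZ(y,z)) )`. -/
def cmi {X Y Z : Type*} [Fintype X] [Fintype Y] [Fintype Z] (P : X × Y × Z → ℝ) : ℝ :=
  ∑ s : X × Y × Z,
    P s * Real.logb 2 (P s * margY P s.2.1 / (margXY P (s.1, s.2.1) * margYZ P (s.2.1, s.2.2)))

/-- A classical channel from `Y` to `W`: a family of conditional distributions. -/
def IsChannel {Y W : Type*} [Fintype W] (R : Y → W → ℝ) : Prop :=
  ∀ y, (∀ w, 0 ≤ R y w) ∧ ∑ w, R y w = 1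

/-- Action `(id ⊗ R)` of a channel `R : Y → W` on a joint distribution on `X × Y`. -/
def applyChan {X Y W : Type*} [Fintype Y] (R : Y → W → ℝ) (P : X × Y → ℝ) : X × W → ℝ :=
  fun t => ∑ y, P (t.1, y) * R y t.2

/-- Action of a channel `R : Y → W` on a distribution on `Y`. -/
def chanOnDist {Y W : Type*} [Fintype Y] (R : Y → W → ℝ) (q : Y → ℝ) : W → ℝ :=
  fun w => ∑ y, q y * R y w

/-- Marginal channel `R_{Y→Y}(y'|y) = Σ_{z'} R(y',z'|y)`. -/
def margChan {Y Y' Z' : Type*} [Fintype Z'] (R : Y → Y' × Z' → ℝ) : Y → Y' → ℝ :=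
  fun y y' => ∑ z', R y (y', z')

end CIT

open CIT in
/-- for the distribution `P` of Statement 17 and the recovery
channel `R(y',z'|y) = p·[y'=y]·[z'=y] + (1−p)·2^{−n}·[(y'+z') mod 2^n = y]`,
(i) `R(P_Y) = P_YZ` and (ii) `D(P ‖ (id⊗R)(P_XY)) ≤ log(1/p)`. -/
theorem recovery_channel_good (n : ℕ) (p : ℝ) (hp0 : 0 < p) (hp1 : p ≤ 1)
    (P : Fin (2 ^ n) × Fin (2 ^ n) × Fin (2 ^ n) → ℝ)
    (hP : P = fun s =>
      p * ((2 ^ n : ℕ) : ℝ)⁻¹ * (if s.1 = s.2.1 ∧ s.2.1 = s.2.2 then 1 else 0) +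
        (1 - p) * (((2 ^ n : ℕ) : ℝ)⁻¹) ^ 2 *
          (if s.1.val = (s.2.1.val + s.2.2.val) % 2 ^ n then 1 else 0))
    (R : Fin (2 ^ n) → Fin (2 ^ n) × Fin (2 ^ n) → ℝ)
    (hR : R = fun y t =>
      p * (if t.1 = y then 1 else 0) * (if t.2 = y then 1 else 0) +
        (1 - p) * ((2 ^ n : ℕ) : ℝ)⁻¹ * (if (t.1.val + t.2.val) % 2 ^ n = y.val then 1 else 0)) :
    chanOnDist R (margY P) = margYZ P ∧
      relEnt P (applyChan R (margXY P)) ≤ ((Real.logb 2 (1 / p) : ℝ) : EReal) := by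
  have hcond : ∀ x y z : Fin (2^n), (x.val = (y.val + z.val) % 2^n) ↔ x = y + z := by
    intro x y z; rw [← Fin.val_add, Fin.val_inj]
  have hcond' : ∀ y a b : Fin (2^n), ((a.val + b.val) % 2^n = y.val) ↔ y = a + b := by
    intro y a b; rw [eq_comm, hcond]
  have hzsub : ∀ x y z : Fin (2^n), (x = y + z) ↔ z = x - y := by
    intro x y z; constructor <;> intro h <;> subst h <;> abel
  have hN : (0:ℝ) < ((2^n : ℕ) : ℝ) := by positivity
  have hNne : ((2^n : ℕ) : ℝ) ≠ 0 := ne_of_gt hN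
  have hu : (0:ℝ) < ((2^n : ℕ) : ℝ)⁻¹ := by positivity
  -- marginals
  have hmY : ∀ y, margY P y = ((2^n : ℕ) : ℝ)⁻¹ := by
    intro y
    simp only [hP, margY, hcond, hzsub, mul_ite, mul_one, mul_zero, ite_and,
      Finset.sum_add_distrib, Finset.sum_ite_eq', Finset.mem_univ, if_true,
      Finset.sum_const, Finset.card_univ, Fintype.card_fin, nsmul_eq_mul,
      Finset.sum_ite_irrel, Finset.sum_ite_eq, Finset.sum_const_zero]
    field_simp
    ring
  have hmYZ : ∀ a b : Fin (2^n), margYZ P (a, b) =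
      (if a = b then p * ((2^n : ℕ) : ℝ)⁻¹ else 0) + (1 - p) * (((2^n : ℕ) : ℝ)⁻¹) ^ 2 := by
    intro a b
    simp only [hP, margYZ, hcond, mul_ite, mul_one, mul_zero, ite_and,
      Finset.sum_add_distrib, Finset.sum_ite_eq', Finset.mem_univ, if_true,
      Finset.sum_const, Finset.card_univ, Fintype.card_fin, nsmul_eq_mul,
      Finset.sum_ite_irrel, Finset.sum_ite_eq, Finset.sum_const_zero]
  have hmXY : ∀ a b : Fin (2^n), margXY P (a, b) =
      (if a = b then p * ((2^n : ℕ) : ℝ)⁻¹ else 0) + (1 - p) * (((2^n : ℕ) : ℝ)⁻¹) ^ 2 := by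
    intro a b
    simp only [hP, margXY, hcond, hzsub, mul_ite, mul_one, mul_zero, ite_and,
      Finset.sum_add_distrib, Finset.sum_ite_eq', Finset.mem_univ, if_true,
      Finset.sum_const, Finset.card_univ, Fintype.card_fin, nsmul_eq_mul,
      Finset.sum_ite_irrel, Finset.sum_ite_eq, Finset.sum_const_zero]
  have hQ : ∀ s : Fin (2^n) × Fin (2^n) × Fin (2^n), applyChan R (margXY P) s =
      (if s.2.1 = s.2.2 then
          (if s.1 = s.2.2 then p * ((2^n:ℕ):ℝ)⁻¹ * p else 0) + (1-p) * (((2^n:ℕ):ℝ)⁻¹)^2 * p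
        else 0) +
      ((if s.1 = s.2.1 + s.2.2 then p * ((2^n:ℕ):ℝ)⁻¹ * ((1-p) * ((2^n:ℕ):ℝ)⁻¹) else 0) +
        (1-p) * (((2^n:ℕ):ℝ)⁻¹)^2 * ((1-p) * ((2^n:ℕ):ℝ)⁻¹)) := by
    intro s
    simp only [applyChan, hmXY, hR, hcond', mul_ite, mul_one, mul_zero, ite_mul, zero_mul,
      one_mul, mul_add, add_mul, Finset.sum_add_distrib, Finset.sum_ite_irrel,
      Finset.sum_ite_eq, Finset.sum_ite_eq', Finset.mem_univ, if_true, Finset.sum_const_zero,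
      Finset.sum_const, Finset.card_univ, Fintype.card_fin, nsmul_eq_mul]
  have hPnn : ∀ s, 0 ≤ P s := by
    intro s
    rw [hP]
    dsimp only
    have h2 : (0:ℝ) ≤ (1-p) * (((2^n:ℕ):ℝ)⁻¹)^2 := by nlinarith [sq_nonneg ((2^n:ℕ):ℝ)⁻¹]
    split_ifs <;> nlinarith [mul_pos hp0 hu]
  have hQge : ∀ s, p * P s ≤ applyChan R (margXY P) s := by
    rintro ⟨x, y, z⟩
    rw [hQ, hP]
    dsimp only
    simp only [hcond]
    have h2 : (0:ℝ) ≤ (1-p) * (((2^n:ℕ):ℝ)⁻¹)^2 := by nlinarith [sq_nonneg ((2^n:ℕ):ℝ)⁻¹]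
    have hconj : (x = y ∧ y = z) ↔ (y = z ∧ x = z) := by
      constructor <;> rintro ⟨h1, h2⟩ <;> subst h1 <;> subst h2 <;> exact ⟨rfl, rfl⟩
    simp only [hconj, ite_and]
    split_ifs <;>
      nlinarith [mul_pos hp0 hu, mul_nonneg h2 hp0.le, mul_nonneg h2 hu.le,
        mul_nonneg (mul_nonneg h2 hu.le) (sub_nonneg.2 hp1), mul_nonneg h2 (sub_nonneg.2 hp1),
        mul_nonneg (mul_nonneg (mul_pos hp0 hu).le hu.le) (sub_nonneg.2 hp1)]
  have hPsum : ∑ s, P s = 1 := by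
    have h1 : ∑ s : Fin (2^n) × Fin (2^n) × Fin (2^n), P s
        = ∑ y : Fin (2^n), margY P y := by
      simp only [Fintype.sum_prod_type]
      rw [Finset.sum_comm]
      rfl
    rw [h1]
    simp only [hmY, Finset.sum_const, Finset.card_univ, Fintype.card_fin, nsmul_eq_mul]
    field_simp
  constructor
  · -- part (i)
    funext t
    obtain ⟨a, b⟩ := t
    have hL : chanOnDist R (margY P) (a, b) =
        (if a = b then p * ((2^n:ℕ):ℝ)⁻¹ else 0) + (1-p) * (((2^n:ℕ):ℝ)⁻¹)^2 := by
      simp only [chanOnDist, hmY, hR, hcond', mul_ite, mul_one, mul_zero, ite_mul, zero_mul,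
        one_mul, mul_add, add_mul, Finset.sum_add_distrib, Finset.sum_ite_irrel,
        Finset.sum_ite_eq, Finset.sum_ite_eq', Finset.mem_univ, if_true, Finset.sum_const_zero,
        Finset.sum_const, Finset.card_univ, Fintype.card_fin, nsmul_eq_mul]
      by_cases hab : a = b <;> simp [hab, eq_comm] <;> ring
    rw [hL, hmYZ]
  · -- part (ii)
    have hsupp : suppLe P (applyChan R (margXY P)) := by
      intro s hs
      have h1 : 0 < P s := lt_of_le_of_ne (hPnn s) (Ne.symm hs)
      have : 0 < applyChan R (margXY P) s := lt_of_lt_of_le (by positivity) (hQge s)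
      exact ne_of_gt this
    rw [relEnt, if_pos hsupp]
    rw [EReal.coe_le_coe_iff]
    have hbound : ∀ s ∈ Finset.univ, P s * Real.logb 2 (P s / applyChan R (margXY P) s)
        ≤ P s * Real.logb 2 (1 / p) := by
      intro s _
      by_cases hs : P s = 0
      · simp [hs]
      · have h1 : 0 < P s := lt_of_le_of_ne (hPnn s) (Ne.symm hs)
        have h2 : 0 < applyChan R (margXY P) s :=
          lt_of_lt_of_le (by positivity) (hQge s)
        have h3 : P s / applyChan R (margXY P) s ≤ 1 / p := by
          rw [div_le_div_iff₀ h2 hp0]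
          nlinarith [hQge s]
        refine mul_le_mul_of_nonneg_left ?_ h1.le
        exact Real.logb_le_logb_of_le (by norm_num) (by positivity) h3
    calc ∑ s, P s * Real.logb 2 (P s / applyChan R (margXY P) s)
        ≤ ∑ s, P s * Real.logb 2 (1 / p) := Finset.sum_le_sum hbound
      _ = (∑ s, P s) * Real.logb 2 (1 / p) := by rw [← Finset.sum_mul]
      _ = Real.logb 2 (1 / p) := by rw [hPsum, one_mul]
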